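/- A single step of the 2N-storage Lie group scheme ΔYᵢ = AᵢΔYᵢ₋₁ + hA(Yᵢ₋₁), Yᵢ = exp(BᵢΔYᵢ)Yᵢ₋₁ (i=1,...,s, with A₁=0, Y₀ = Yₜ) applied to dY/dt = A(Y)Y with A(Y) ∈ 𝔤 for all Y, where G is a matrix Lie group with Lie algebra 𝔤 and Yₜ ∈ G, produces Yₛ ∈ G. That is, each stage value Yᵢ lies in G. -/

import Mathlib

open Matrix

theorem low_storage_scheme_stays_in_group
    {n : ℕ} (G : Set (Matrix (Fin n) (Fin n) ℝ))
    (𝔤 : Submodule ℝ (Matrix (Fin n) (Fin n) ℝ))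
    (hexp : ∀ X ∈ 𝔤, NormedSpace.exp X ∈ G)
    (hmul : ∀ X ∈ G, ∀ Y ∈ G, X * Y ∈ G)
    (A : Matrix (Fin n) (Fin n) ℝ → Matrix (Fin n) (Fin n) ℝ)
    (hA : ∀ Y, A Y ∈ 𝔤)
    (h : ℝ) (s : ℕ) (Ac Bc : ℕ → ℝ) (hA1 : Ac 1 = 0)
    (Yt : Matrix (Fin n) (Fin n) ℝ) (hYt : Yt ∈ G)
    (Y ΔY : ℕ → Matrix (Fin n) (Fin n) ℝ)
    (hY0 : Y 0 = Yt) (hΔY0 : ΔY 0 = 0)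
    (hΔ : ∀ i, ΔY (i + 1) = Ac (i + 1) • ΔY i + h • A (Y i))
    (hYstep : ∀ i, Y (i + 1) = NormedSpace.exp (Bc (i + 1) • ΔY (i + 1)) * Y i) :
    (∀ i, i ≤ s → Y i ∈ G) ∧ Y s ∈ G := by
  have key : ∀ i, ΔY i ∈ 𝔤 ∧ Y i ∈ G := by
    intro i
    induction i with
    | zero => exact ⟨by rw [hΔY0]; exact 𝔤.zero_mem, by rw [hY0]; exact hYt⟩
    | succ k ih =>
      have hΔk : ΔY (k + 1) ∈ 𝔤 := by
        rw [hΔ k]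
        exact 𝔤.add_mem (𝔤.smul_mem _ ih.1) (𝔤.smul_mem _ (hA _))
      refine ⟨hΔk, ?_⟩
      rw [hYstep k]
      exact hmul _ (hexp _ (𝔤.smul_mem _ hΔk)) _ ih.2
  exact ⟨fun i _ => (key i).2, (key s).2⟩
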